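/- Every ball-positive averaging model on a two-point set is symmetric: let A = (a_{ij}) be a 2×2 real matrix with nonnegative entries and row sums equal to 1 (right-stochastic), and let κ₁, κ₂ > 0. Suppose that for all (u₁, u₂) ∈ ℝ²: κ₁(a₁₁u₁ + a₁₂u₂)u₁ + κ₂(a₂₁u₁ + a₂₂u₂)u₂ ≥ κ₁(a₁₁u₁ + a₁₂u₂)² + κ₂(a₂₁u₁ + a₂₂u₂)². Then κ₁ a₁₂ = κ₂ a₂₁. -/
import Mathlib


/-- every ball-positive averaging model on a two-point set is symmetric. -/
theorem two_point_ballPositive_symmetric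
    (a11 a12 a21 a22 κ1 κ2 : ℝ)
    (h11 : 0 ≤ a11) (h12 : 0 ≤ a12) (h21 : 0 ≤ a21) (h22 : 0 ≤ a22)
    (hrow1 : a11 + a12 = 1) (hrow2 : a21 + a22 = 1)
    (hκ1 : 0 < κ1) (hκ2 : 0 < κ2)
    (hball : ∀ u1 u2 : ℝ,
      κ1 * (a11 * u1 + a12 * u2) ^ 2 + κ2 * (a21 * u1 + a22 * u2) ^ 2 ≤
        κ1 * (a11 * u1 + a12 * u2) * u1 + κ2 * (a21 * u1 + a22 * u2) * u2) :
    κ1 * a12 = κ2 * a21 := by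
  set c : ℝ := κ1 * a12 - κ2 * a21 with hc
  set d : ℝ := κ1 * a12 * a11 - κ2 * a21 ^ 2 with hd
  have key : ∀ t : ℝ, 0 ≤ c * t + d * t ^ 2 := by
    intro t
    have e1 : a12 = 1 - a11 := by linarith
    have e2 : a22 = 1 - a21 := by linarith
    have h := hball (1 + t) 1
    rw [e1, e2] at h
    rw [hc, hd, e1]
    nlinarith [h]
  have hD : (0:ℝ) < 2 * (d ^ 2 + 1) := by positivity
  set t : ℝ := -c / (2 * (d ^ 2 + 1)) with ht
  have hct : c = -t * (2 * (d ^ 2 + 1)) := by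
    rw [ht]; field_simp
  have hk := key t
  have ht0 : t = 0 := by nlinarith [sq_nonneg t, sq_nonneg (4 * d - 1)]
  have : c = 0 := by rw [hct, ht0]; ring
  linarith [this, hc]
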